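/- Let $\mathbb{F}_2^E$ be the vector space over $\mathbb{F}_2$ with basis indexed by pairs $(i,j)$, $i\in[1,k]$, $j\in[1,m]$ with $k,m\ge 2$, and let $\eta$ be the bilinear form with $\eta(e_{ij},e_{\alpha\beta})$ equal mod 2 to the adjacency of the grid-with-diagonals graph: $\eta(e_{ij},e_{\alpha\beta})=1$ iff $(\alpha,\beta)\in\{(i,j\pm1),(i\pm1,j),(i+1,j-1),(i-1,j+1)\}$. Let $C$ be the set of pairs with $i\le k-1$ and $j\ge 2$. Then the subspace $\mathbb{F}_2^C$ spanned by $\{e_{ij}:(i,j)\in C\}$ intersects the radical $\ker\eta$ trivially: any $h\in\mathbb{F}_2^C$ with $\eta(h,e_{ij})=0$ for all $(i,j)$ must be $0$. -/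
import Mathlib

theorem stmt17 (k m : ℕ) (hk : 2 ≤ k) (hm : 2 ≤ m)
    (h : Fin k × Fin m → ZMod 2)
    (hsupp : ∀ p : Fin k × Fin m, ((p.1 : ℕ) = k - 1 ∨ (p.2 : ℕ) = 0) → h p = 0)
    (horth : ∀ q : Fin k × Fin m,
      (∑ p : Fin k × Fin m,
        (if ((p.1 = q.1 ∧ ((p.2 : ℕ) + 1 = (q.2 : ℕ) ∨ (q.2 : ℕ) + 1 = (p.2 : ℕ))) ∨
             (p.2 = q.2 ∧ ((p.1 : ℕ) + 1 = (q.1 : ℕ) ∨ (q.1 : ℕ) + 1 = (p.1 : ℕ))) ∨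
             ((p.1 : ℕ) + 1 = (q.1 : ℕ) ∧ (q.2 : ℕ) + 1 = (p.2 : ℕ)) ∨
             ((q.1 : ℕ) + 1 = (p.1 : ℕ) ∧ (p.2 : ℕ) + 1 = (q.2 : ℕ)))
          then h p else 0)) = 0) :
    h = 0 := by
  have eqn : ∀ (i β : ℕ) (hi : i + 1 < k) (hβ : β < m),
      (∀ p : Fin k × Fin m, i + 1 ≤ (p.1 : ℕ) → h p = 0) →
      h (⟨i, by omega⟩, ⟨β, hβ⟩) +
        (if hb : β + 1 < m then h (⟨i, by omega⟩, ⟨β + 1, hb⟩) else 0) = 0 := by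
    intro i β hi hβ Hrow
    have H := horth (⟨i + 1, hi⟩, ⟨β, hβ⟩)
    by_cases hb : β + 1 < m
    · rw [dif_pos hb]
      have pw : ∀ p ∈ (Finset.univ : Finset (Fin k × Fin m)),
          (if ((p.1 = (⟨i + 1, hi⟩ : Fin k) ∧ ((p.2 : ℕ) + 1 = β ∨ β + 1 = (p.2 : ℕ))) ∨
               (p.2 = (⟨β, hβ⟩ : Fin m) ∧ ((p.1 : ℕ) + 1 = i + 1 ∨ (i + 1) + 1 = (p.1 : ℕ))) ∨
               ((p.1 : ℕ) + 1 = i + 1 ∧ β + 1 = (p.2 : ℕ)) ∨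
               ((i + 1) + 1 = (p.1 : ℕ) ∧ (p.2 : ℕ) + 1 = β))
            then h p else 0) =
          ((if p = ((⟨i, by omega⟩, ⟨β, hβ⟩) : Fin k × Fin m) then h p else 0) +
           (if p = ((⟨i, by omega⟩, ⟨β + 1, hb⟩) : Fin k × Fin m) then h p else 0)) := by
        rintro ⟨⟨x, hx⟩, ⟨y, hy⟩⟩ -
        simp only [Prod.mk.injEq, Fin.mk.injEq, Fin.val_mk]
        split_ifs <;> (try simp only [add_zero, zero_add]) <;>
          first | rfl | omega | exact Hrow ⟨⟨x, hx⟩, ⟨y, hy⟩⟩ (by show i + 1 ≤ x; omega)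
      have H2 := ((Finset.sum_congr rfl pw).symm.trans H)
      rw [Finset.sum_add_distrib] at H2
      simpa using H2
    · rw [dif_neg hb, add_zero]
      have pw : ∀ p ∈ (Finset.univ : Finset (Fin k × Fin m)),
          (if ((p.1 = (⟨i + 1, hi⟩ : Fin k) ∧ ((p.2 : ℕ) + 1 = β ∨ β + 1 = (p.2 : ℕ))) ∨
               (p.2 = (⟨β, hβ⟩ : Fin m) ∧ ((p.1 : ℕ) + 1 = i + 1 ∨ (i + 1) + 1 = (p.1 : ℕ))) ∨
               ((p.1 : ℕ) + 1 = i + 1 ∧ β + 1 = (p.2 : ℕ)) ∨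
               ((i + 1) + 1 = (p.1 : ℕ) ∧ (p.2 : ℕ) + 1 = β))
            then h p else 0) =
          (if p = ((⟨i, by omega⟩, ⟨β, hβ⟩) : Fin k × Fin m) then h p else 0) := by
        rintro ⟨⟨x, hx⟩, ⟨y, hy⟩⟩ -
        simp only [Prod.mk.injEq, Fin.mk.injEq, Fin.val_mk]
        split_ifs <;> first | rfl | omega | exact Hrow ⟨⟨x, hx⟩, ⟨y, hy⟩⟩ (by show i + 1 ≤ x; omega)
      have H2 := ((Finset.sum_congr rfl pw).symm.trans H)
      simpa using H2
  have main : ∀ d i, i + d + 1 = k → ∀ p : Fin k × Fin m, i ≤ (p.1 : ℕ) → h p = 0 := by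
    intro d
    induction d with
    | zero =>
      intro i hik p hp
      have := p.1.isLt
      exact hsupp p (Or.inl (by omega))
    | succ d ih =>
      intro i hik p hp
      rcases Nat.lt_or_ge (p.1 : ℕ) (i + 1) with hlt | hge
      · have hx : (p.1 : ℕ) = i := by omega
        have Hrow : ∀ p : Fin k × Fin m, i + 1 ≤ (p.1 : ℕ) → h p = 0 :=
          fun p hp => ih (i + 1) (by omega) p hp
        have inner : ∀ e β (hβ : β < m), β + e + 1 = m →
            h (⟨i, by omega⟩, ⟨β, hβ⟩) = 0 := by
          intro e
          induction e with
          | zero =>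
            intro β hβ he
            have E := eqn i β (by omega) hβ Hrow
            rwa [dif_neg (by omega), add_zero] at E
          | succ e ihe =>
            intro β hβ he
            have hb : β + 1 < m := by omega
            have E := eqn i β (by omega) hβ Hrow
            rwa [dif_pos hb, ihe (β + 1) hb (by omega), add_zero] at E
        have hp' : p = ((⟨i, by omega⟩, ⟨(p.2 : ℕ), p.2.isLt⟩) : Fin k × Fin m) := by
          obtain ⟨p1, p2⟩ := p
          rw [Prod.ext_iff]
          exact ⟨Fin.ext hx, Fin.ext rfl⟩
        rw [hp']
        exact inner (m - (p.2 : ℕ) - 1) (p.2 : ℕ) p.2.isLt (by omega)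
      · exact ih (i + 1) (by omega) p hge
  funext p
  exact main (k - 1) 0 (by omega) p (Nat.zero_le _)
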